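/- Let G be a loop-free digraph with n vertices such that every induced subdigraph G[U] admits a weak balanced separator of size at most k. Then crank(G) ≤ R_k(n) − 1, where R_k(n) = k + R_k(⌈(n−k)/2⌉) for n > k and R_k(r₀) = r₀ for r₀ ≤ k. -/

import Mathlib

open scoped Classical

variable {V : Type*}

/-- `b` is reachable from `a` by a (possibly empty) directed path staying inside `S`. -/
def ReachIn (E : V → V → Prop) (S : Finset V) (a b : V) : Prop :=
  Relation.ReflTransGen (fun x y => x ∈ S ∧ y ∈ S ∧ E x y) a b

/-- The induced subdigraph `G[S]` is strongly connected. -/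
def StronglyConnIn (E : V → V → Prop) (S : Finset V) : Prop :=
  ∀ a ∈ S, ∀ b ∈ S, ReachIn E S a b

/-- The induced subdigraph `G[S]` contains at least one edge. -/
def HasEdgeIn (E : V → V → Prop) (S : Finset V) : Prop :=
  ∃ a ∈ S, ∃ b ∈ S, E a b

/-- `G[S]` is acyclic: every strongly connected component of `G[S]` is trivial,
equivalently there is no edge lying on a closed walk inside `S`. -/
def AcyclicIn (E : V → V → Prop) (S : Finset V) : Prop :=
  ¬ ∃ a ∈ S, ∃ b ∈ S, E a b ∧ ReachIn E S b a

open Classical in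
/-- The strongly connected component of `v` in the induced subdigraph `G[S]`. -/
noncomputable def sccOf [DecidableEq V] (E : V → V → Prop) (S : Finset V) (v : V) : Finset V :=
  S.filter (fun u => ReachIn E S v u ∧ ReachIn E S u v)

open Classical in
/-- Fuel-based auxiliary function implementing the recursive definition of cycle rank. -/
noncomputable def crankAux [DecidableEq V] (E : V → V → Prop) : ℕ → Finset V → ℕ
  | 0, _ => 0
  | n + 1, S =>
    if AcyclicIn E S then 0
    else if StronglyConnIn E S then
      1 + sInf {m | ∃ v ∈ S, crankAux E n (S.erase v) = m}
    else
      S.sup (fun v => crankAux E n (sccOf E S v))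

/-- The cycle rank of the digraph `(V, E)`. -/
noncomputable def crank [DecidableEq V] [Fintype V] (E : V → V → Prop) : ℕ :=
  crankAux E (Fintype.card V) Finset.univ


/-- Fuel-based implementation of the recurrence
`R_k(n) = k + R_k(⌈(n−k)/2⌉)` for `n > k`, `R_k(n) = n` for `n ≤ k`.
(Note `⌈(n−k)/2⌉ = (n − k + 1)/2` in natural-number arithmetic.) -/
def RrecAux (k : ℕ) : ℕ → ℕ → ℕ
  | 0, n => n
  | f + 1, n => if n ≤ k then n else k + RrecAux k f ((n - k + 1) / 2)

/-- The recurrence `R_k(n)`: for `k, n ≥ 1`, a fuel of `n` steps suffices,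
since each recursive step at least halves the argument. -/
def Rrec (k n : ℕ) : ℕ := RrecAux k n n
/-- `S` is a weak balanced separator for `U`: every strongly connected component of
`G[U ∖ S]` contains at most `⌈|U ∖ S|/2⌉` vertices. -/
def IsWeakBalSep {V : Type*} [DecidableEq V] (E : V → V → Prop) (U S : Finset V) : Prop :=
  ∀ v ∈ U \ S, (sccOf E (U \ S) v).card ≤ ((U \ S).card + 1) / 2


-- lemmas

lemma reachIn_mono (E : V → V → Prop) {S S' : Finset V} (h : S ⊆ S') {a b : V}
    (hr : ReachIn E S a b) : ReachIn E S' a b :=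
  by
    unfold ReachIn at *
    induction hr with
    | refl => exact Relation.ReflTransGen.refl
    | tail _ hxy ih => exact ih.tail ⟨h hxy.1, h hxy.2.1, hxy.2.2⟩

lemma sccOf_subset [DecidableEq V] (E : V → V → Prop) (S : Finset V) (v : V) :
    sccOf E S v ⊆ S := Finset.filter_subset _ _

lemma mem_sccOf_self [DecidableEq V] (E : V → V → Prop) {S : Finset V} {v : V} (hv : v ∈ S) :
    v ∈ sccOf E S v := by
  simp only [sccOf, Finset.mem_filter]; exact ⟨hv, Relation.ReflTransGen.refl, Relation.ReflTransGen.refl⟩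

lemma sccOf_mono [DecidableEq V] (E : V → V → Prop) {C S : Finset V} (h : C ⊆ S) (v : V) :
    sccOf E C v ⊆ sccOf E S v := by
  intro u hu
  simp only [sccOf, Finset.mem_filter] at hu ⊢
  exact ⟨h hu.1, reachIn_mono E h hu.2.1, reachIn_mono E h hu.2.2⟩

lemma sc_of_sccOf_eq [DecidableEq V] (E : V → V → Prop) {S : Finset V} {v : V}
    (h : sccOf E S v = S) : StronglyConnIn E S := by
  intro a ha b hb
  have hha := h ▸ ha
  have hhb := h ▸ hb
  rw [← h] at ha hb
  simp only [sccOf, Finset.mem_filter] at ha hb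
  exact Relation.ReflTransGen.trans ha.2.2 hb.2.1

lemma sccOf_ssubset [DecidableEq V] (E : V → V → Prop) {S : Finset V}
    (hsc : ¬ StronglyConnIn E S) (v : V) : sccOf E S v ⊂ S :=
  (Finset.ssubset_iff_subset_ne).2 ⟨sccOf_subset E S v, fun h => hsc (sc_of_sccOf_eq E h)⟩

lemma two_le_card_of_not_acyclic [DecidableEq V] (E : V → V → Prop) {S : Finset V}
    (hloop : ∀ v, ¬ E v v) (h : ¬ AcyclicIn E S) : 2 ≤ S.card := by
  rw [AcyclicIn, not_not] at h
  obtain ⟨a, ha, b, hb, he, _⟩ := h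
  have hab : a ≠ b := fun h => hloop a (h ▸ he)
  exact Finset.one_lt_card.2 ⟨a, ha, b, hb, hab⟩

lemma acyclicIn_empty (E : V → V → Prop) : AcyclicIn E (∅ : Finset V) := by
  rintro ⟨a, ha, _⟩; exact absurd ha (Finset.notMem_empty a)

lemma crankAux_le_card [DecidableEq V] (E : V → V → Prop) (hloop : ∀ v, ¬ E v v) :
    ∀ f (S : Finset V), S.card ≤ f → crankAux E f S ≤ S.card - 1 := by
  intro f
  induction f with
  | zero => intro S _; simp [crankAux]
  | succ f ih =>
    intro S hS
    rw [crankAux]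
    split_ifs with hac hsc
    · omega
    · have h2 : 2 ≤ S.card := two_le_card_of_not_acyclic E hloop hac
      have hpos : 0 < S.card := by omega
      obtain ⟨v, hv⟩ := Finset.card_pos.1 hpos
      have hmem : crankAux E f (S.erase v) ∈
          {m | ∃ v ∈ S, crankAux E f (S.erase v) = m} := ⟨v, hv, rfl⟩
      have h1 := Nat.sInf_le hmem
      have hce : (S.erase v).card = S.card - 1 := Finset.card_erase_of_mem hv
      have h3 := ih (S.erase v) (by omega)
      omega
    · apply Finset.sup_le
      intro v hv
      have hc := Finset.card_lt_card (sccOf_ssubset E hsc v)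
      have := ih (sccOf E S v) (by omega)
      omega

section R
lemma rrecAux_eq (k : ℕ) (hk : 1 ≤ k) :
    ∀ f f' n, n ≤ f → n ≤ f' → RrecAux k f n = RrecAux k f' n := by
  intro f
  induction f with
  | zero =>
    intro f' n h1 _
    interval_cases n
    cases f' with
    | zero => rfl
    | succ g => simp [RrecAux, Nat.zero_le]
  | succ f ih =>
    intro f' n h1 h2
    by_cases hnk : n ≤ k
    · cases f' with
      | zero => simp [RrecAux, hnk]
      | succ g => simp [RrecAux, hnk]
    · have hn2 : 2 ≤ n := by omega
      obtain ⟨g, rfl⟩ : ∃ g, f' = g + 1 := ⟨f' - 1, by omega⟩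
      simp only [RrecAux, if_neg hnk]
      rw [ih g ((n - k + 1) / 2) (by omega) (by omega)]

lemma rrec_eq_of_le (k n : ℕ) (h : n ≤ k) : Rrec k n = n := by
  cases n with
  | zero => rfl
  | succ m => simp [Rrec, RrecAux, h]

lemma rrec_eq_of_gt (k n : ℕ) (hk : 1 ≤ k) (h : k < n) :
    Rrec k n = k + Rrec k ((n - k + 1) / 2) := by
  obtain ⟨m, rfl⟩ : ∃ m, n = m + 1 := ⟨n - 1, by omega⟩
  show RrecAux k (m + 1) (m + 1) = _
  rw [RrecAux, if_neg (by omega)]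
  congr 1
  exact rrecAux_eq k hk m _ _ (by omega) le_rfl

lemma rrec_le_self (k : ℕ) (hk : 1 ≤ k) : ∀ n, Rrec k n ≤ n := by
  intro n
  induction n using Nat.strong_induction_on with
  | _ n ih =>
    by_cases h : n ≤ k
    · rw [rrec_eq_of_le k n h]
    · rw [rrec_eq_of_gt k n hk (by omega)]
      have := ih ((n - k + 1) / 2) (by omega)
      omega

lemma rrec_mono (k : ℕ) (hk : 1 ≤ k) : ∀ m' m, m ≤ m' → Rrec k m ≤ Rrec k m' := by
  intro m'
  induction m' using Nat.strong_induction_on with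
  | _ m' ih =>
    intro m hm
    by_cases h' : m' ≤ k
    · rw [rrec_eq_of_le k m (by omega), rrec_eq_of_le k m' h']; exact hm
    · rw [rrec_eq_of_gt k m' hk (by omega)]
      by_cases h : m ≤ k
      · rw [rrec_eq_of_le k m h]; omega
      · rw [rrec_eq_of_gt k m hk (by omega)]
        have : Rrec k ((m - k + 1) / 2) ≤ Rrec k ((m' - k + 1) / 2) :=
          ih ((m' - k + 1) / 2) (by omega) _ (by omega)
        omega

lemma rrec_add_le (k : ℕ) (hk : 1 ≤ k) : ∀ m d, Rrec k (m + d) ≤ Rrec k m + d := by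
  intro m
  induction m using Nat.strong_induction_on with
  | _ m ih =>
    intro d
    by_cases h : m + d ≤ k
    · rw [rrec_eq_of_le k _ h, rrec_eq_of_le k m (by omega)]
    · by_cases hm : m ≤ k
      · rw [rrec_eq_of_le k m hm]
        have := rrec_le_self k hk (m + d)
        omega
      · rw [rrec_eq_of_gt k _ hk (by omega), rrec_eq_of_gt k m hk (by omega)]
        have h1 : (m + d - k + 1) / 2 ≤ (m - k + 1) / 2 + d := by omega
        have h2 : Rrec k ((m + d - k + 1) / 2) ≤ Rrec k ((m - k + 1) / 2 + d) :=
          rrec_mono k hk _ _ h1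
        have h3 : Rrec k ((m - k + 1) / 2 + d) ≤ Rrec k ((m - k + 1) / 2) + d :=
          ih ((m - k + 1) / 2) (by omega) d
        omega

lemma rrec_pos (k h : ℕ) (hk : 1 ≤ k) (hh : 1 ≤ h) : 1 ≤ Rrec k h := by
  by_cases hle : h ≤ k
  · rw [rrec_eq_of_le k h hle]; omega
  · rw [rrec_eq_of_gt k h hk (by omega)]; omega
end R

lemma claimC [DecidableEq V] (E : V → V → Prop) (hloop : ∀ v, ¬ E v v) (k N : ℕ) (hk : 1 ≤ k)
    (IH : ∀ S' : Finset V, S'.card < N → ∀ f', S'.card ≤ f' →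
      crankAux E f' S' ≤ Rrec k S'.card - 1) :
    ∀ f (S T : Finset V) (t h : ℕ), S.card ≤ f → S.card ≤ N → (S ∩ T).card ≤ t → h < N →
      (∀ v ∈ S \ T, (sccOf E (S \ T) v).card ≤ h) →
      crankAux E f S ≤ t + Rrec k h - 1 := by
  intro f
  induction f with
  | zero => intro S T t h _ _ _ _ _; simp [crankAux]
  | succ f ih =>
    intro S T t h hSf hSN htT hhN hscc
    by_cases hac : AcyclicIn E S
    · rw [crankAux, if_pos hac]; omega
    have h2 : 2 ≤ S.card := two_le_card_of_not_acyclic E hloop hac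
    by_cases hsc : StronglyConnIn E S
    · by_cases hST : (S ∩ T).Nonempty
      · rw [crankAux, if_neg hac, if_pos hsc]
        obtain ⟨v, hv⟩ := hST
        have hvS : v ∈ S := (Finset.mem_inter.1 hv).1
        have hvT : v ∈ T := (Finset.mem_inter.1 hv).2
        have ht1 : 1 ≤ t := by
          have : 1 ≤ (S ∩ T).card := Finset.card_pos.2 ⟨v, hv⟩
          omega
        have hsd : S.erase v \ T = S \ T := by
          ext u
          simp only [Finset.mem_sdiff, Finset.mem_erase]
          constructor
          · rintro ⟨⟨_, hu⟩, hnt⟩; exact ⟨hu, hnt⟩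
          · rintro ⟨hu, hnt⟩; exact ⟨⟨fun he => hnt (he ▸ hvT), hu⟩, hnt⟩
        have hint : S.erase v ∩ T ⊆ (S ∩ T).erase v := by
          intro u hu
          simp only [Finset.mem_inter, Finset.mem_erase] at hu ⊢
          exact ⟨hu.1.1, hu.1.2, hu.2⟩
        have hce : (S.erase v).card = S.card - 1 := Finset.card_erase_of_mem hvS
        have hintc : (S.erase v ∩ T).card ≤ t - 1 := by
          have h5 := Finset.card_le_card hint
          have h6 : ((S ∩ T).erase v).card = (S ∩ T).card - 1 := Finset.card_erase_of_mem hv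
          omega
        have hb := ih (S.erase v) T (t - 1) h (by omega) (by omega) hintc hhN
          (by rw [hsd]; exact hscc)
        have hmem : crankAux E f (S.erase v) ∈
            {m | ∃ v ∈ S, crankAux E f (S.erase v) = m} := ⟨v, hvS, rfl⟩
        have h1 := Nat.sInf_le hmem
        by_cases hR : 1 ≤ Rrec k h
        · omega
        · -- Rrec k h = 0, so h = 0, so S \ T = ∅, so S ⊆ T and t ≥ card S ≥ 2
          have hh0 : h = 0 := by
            by_contra hne
            have := rrec_pos k h hk (by omega)
            omega
          have hempty : S \ T = ∅ := by
            rw [← Finset.not_nonempty_iff_eq_empty]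
            rintro ⟨u, hu⟩
            have hle := hscc u hu
            have : 1 ≤ (sccOf E (S \ T) u).card :=
              Finset.card_pos.2 ⟨u, mem_sccOf_self E hu⟩
            omega
          have hsub : S ⊆ T := by
            intro u hu
            by_contra hnt
            have : u ∈ S \ T := Finset.mem_sdiff.2 ⟨hu, hnt⟩
            rw [hempty] at this
            exact absurd this (Finset.notMem_empty u)
          have hcc : (S ∩ T).card = S.card := by
            rw [Finset.inter_eq_left.2 hsub]
          have ht2 : 2 ≤ t := by omega
          omega
      · -- S ∩ T = ∅ : S itself is an SCC of S \ T = S, so card S ≤ h < N; use IH on S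
        rw [Finset.not_nonempty_iff_eq_empty] at hST
        have hsd : S \ T = S := by
          ext u
          simp only [Finset.mem_sdiff]
          refine ⟨fun hu => hu.1, fun hu => ⟨hu, fun hT => ?_⟩⟩
          have : u ∈ S ∩ T := Finset.mem_inter.2 ⟨hu, hT⟩
          rw [hST] at this
          exact absurd this (Finset.notMem_empty u)
        have hpos : 0 < S.card := by omega
        obtain ⟨v, hvS⟩ := Finset.card_pos.1 hpos
        have hsccS : sccOf E S v = S := by
          apply Finset.Subset.antisymm (sccOf_subset E S v)
          intro u hu
          simp only [sccOf, Finset.mem_filter]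
          exact ⟨hu, hsc v hvS u hu, hsc u hu v hvS⟩
        have hcard : S.card ≤ h := by
          have := hscc v (by rw [hsd]; exact hvS)
          rw [hsd, hsccS] at this
          exact this
        have hIH := IH S (by omega) (f + 1) hSf
        have hmono := rrec_mono k hk h S.card hcard
        omega
    · -- not strongly connected: bound each SCC
      rw [crankAux, if_neg hac, if_neg hsc]
      apply Finset.sup_le
      intro v hv
      have hss := sccOf_ssubset E hsc v
      have hsub : sccOf E S v ⊆ S := sccOf_subset E S v
      have hclt := Finset.card_lt_card hss
      apply ih (sccOf E S v) T t h (by omega) (by omega) ?_ hhN ?_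
      · refine le_trans (Finset.card_le_card ?_) htT
        exact Finset.inter_subset_inter hsub (Finset.Subset.refl T)
      · intro w hw
        have hsub2 : sccOf E S v \ T ⊆ S \ T := fun u hu =>
          Finset.mem_sdiff.2 ⟨hsub (Finset.mem_sdiff.1 hu).1, (Finset.mem_sdiff.1 hu).2⟩
        exact le_trans (Finset.card_le_card (sccOf_mono E hsub2 w)) (hscc w (hsub2 hw))


lemma mainLemma [DecidableEq V] (E : V → V → Prop) (k : ℕ) (hk : 1 ≤ k)
    (hloop : ∀ v, ¬ E v v)
    (hsep : ∀ U : Finset V, ∃ S : Finset V, S.card ≤ k ∧ IsWeakBalSep E U S) :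
    ∀ n (S : Finset V), S.card ≤ n → ∀ f, S.card ≤ f →
      crankAux E f S ≤ Rrec k S.card - 1 := by
  intro n
  induction n using Nat.strong_induction_on with
  | _ n IHn =>
    intro S hSn f hSf
    by_cases hcase : S.card ≤ k
    · have := crankAux_le_card E hloop f S hSf
      rw [rrec_eq_of_le k S.card hcase]
      omega
    · obtain ⟨T, hTk, hTsep⟩ := hsep S
      set n0 := S.card with hn0
      have h2 : 2 ≤ n0 := by omega
      set t0 := (S ∩ T).card with ht0
      have ht0k : t0 ≤ k := le_trans (Finset.card_le_card Finset.inter_subset_right) hTk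
      have hsd : (S \ T).card = n0 - t0 := by
        have := Finset.card_inter_add_card_sdiff S T
        omega
      set h := ((S \ T).card + 1) / 2 with hh
      have hhlt : h < n0 := by omega
      have IH' : ∀ S' : Finset V, S'.card < n0 → ∀ f', S'.card ≤ f' →
          crankAux E f' S' ≤ Rrec k S'.card - 1 := by
        intro S' hlt f' hf'
        exact IHn S'.card (by omega) S' le_rfl f' hf'
      have hmain := claimC E hloop k n0 hk IH' f S T t0 h hSf le_rfl le_rfl hhlt
        (fun v hv => hTsep v hv)
      have harith : t0 + Rrec k h ≤ Rrec k n0 := by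
        rw [rrec_eq_of_gt k n0 hk (by omega)]
        have h1 : h ≤ (n0 - k + 1) / 2 + (k - t0) := by omega
        have h2' : Rrec k h ≤ Rrec k ((n0 - k + 1) / 2 + (k - t0)) := rrec_mono k hk _ _ h1
        have h3 := rrec_add_le k hk ((n0 - k + 1) / 2) (k - t0)
        omega
      omega


/-- If `G` is a loop-free digraph with `n` vertices such that every induced
subdigraph `G[U]` admits a weak balanced separator of size at most `k`, then
`crank(G) ≤ R_k(n) − 1`. -/
theorem crank_le_Rrec {V : Type*} [DecidableEq V] [Fintype V] (E : V → V → Prop) (k n : ℕ)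
    (hk : 1 ≤ k) (hn : Fintype.card V = n)
    (hloopfree : ∀ v, ¬ E v v)
    (hsep : ∀ U : Finset V, ∃ S : Finset V, S.card ≤ k ∧ IsWeakBalSep E U S) :
    crank E ≤ Rrec k n - 1 := by
  have hmain := mainLemma E k hk hloopfree hsep n Finset.univ
    (by rw [Finset.card_univ, hn]) (Fintype.card V) (by rw [Finset.card_univ])
  rw [Finset.card_univ, hn] at hmain
  unfold crank
  rw [hn]
  exact hmain
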